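/- (Stability criterion in original parameters, iff form) Let ε > 0, α > 0, c_μ > 0, c_δ > 0 and ω > 0; set ε̄ = √(ε² + αc_μ), and let A = [[0, I₂],[D(1, αc_δ/ε̄²) + (ω/ε̄)²I₂, -2(ω/ε̄)S]]. Then every eigenvalue λ ∈ ℂ of A satisfies Re(λ) < ε/ε̄ if and only if c_δ/c_μ > 2√(ε²/(αc_μ) + 1) and √(αc_μ)·√( √(c_δ²/c_μ² + 4(ε²/(αc_μ))(ε²/(αc_μ) + 1)) - 2ε²/(αc_μ) - 1 ) < ω < √(αc_μ)·√( c_δ²/(4c_μ²) - ε²/(αc_μ) ). -/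

import Mathlib

open Matrix

/-- The rotation generator `S = [[0,-1],[1,0]]`. -/
def Smat : Matrix (Fin 2) (Fin 2) ℝ := !![0, -1; 1, 0]

/-- The saddle curvature matrix `D(a, b) = diag(a - b, a + b)`. -/
def Dmat (a b : ℝ) : Matrix (Fin 2) (Fin 2) ℝ := !![a - b, 0; 0, a + b]

/-- The 4×4 first-order system matrix of the normalized q-dynamics. -/
noncomputable def Amat (ωb δb : ℝ) : Matrix (Fin 2 ⊕ Fin 2) (Fin 2 ⊕ Fin 2) ℝ :=
  Matrix.fromBlocks 0 1 (Dmat 1 δb + (ωb ^ 2) • (1 : Matrix (Fin 2) (Fin 2) ℝ))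
    (-((2 * ωb) • Smat))

lemma eig_iff_det {n : Type*} [Fintype n] [DecidableEq n] (N : Matrix n n ℂ) (μ : ℂ) :
    Module.End.HasEigenvalue (Matrix.toLin' N) μ ↔ (N - μ • 1).det = 0 := by
  rw [← Matrix.exists_mulVec_eq_zero_iff]
  constructor
  · intro h
    obtain ⟨v, hv⟩ := h.exists_hasEigenvector
    exact ⟨v, hv.2, by
      have := hv.1
      rw [Module.End.mem_eigenspace_iff] at this
      simp [Matrix.sub_mulVec, Matrix.toLin'_apply] at this ⊢
      simp [this, Matrix.smul_mulVec]⟩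
  · rintro ⟨v, hv0, hv⟩
    apply Module.End.hasEigenvalue_of_hasEigenvector (x := v)
    constructor
    · rw [Module.End.mem_eigenspace_iff]
      rw [Matrix.sub_mulVec] at hv
      have : N.mulVec v = (μ • (1:Matrix n n ℂ)).mulVec v := by
        linear_combination (norm := module) hv
      simpa [Matrix.toLin'_apply, Matrix.smul_mulVec] using this
    · exact hv0

lemma det_Amat (w d : ℝ) (μ : ℂ) :
    ((Amat w d).map (algebraMap ℝ ℂ) - μ • 1).det
      = (μ ^ 2 - (1 - (w:ℂ) ^ 2)) ^ 2 - ((d:ℂ) ^ 2 - 4 * (w:ℂ) ^ 2) := by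
  have h : ((Amat w d).map (algebraMap ℝ ℂ) - μ • 1).submatrix finSumFinEquiv.symm finSumFinEquiv.symm
      = !![-μ, 0, 1, 0; 0, -μ, 0, 1;
           ((1:ℂ) - d + w^2), 0, -μ, (2*w : ℂ); 0, ((1:ℂ) + d + w^2), (-(2*w) : ℂ), -μ] := by
    ext i j
    fin_cases i <;> fin_cases j <;>
      norm_num [Amat, Smat, Dmat, Matrix.fromBlocks, finSumFinEquiv, Fin.addCases, Matrix.one_apply,
        Fin.ext_iff, Fin.subNat, Fin.castLT] <;> (try ring) <;> (try (rintro ⟨⟩))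
  rw [← Matrix.det_submatrix_equiv_self finSumFinEquiv.symm, h]
  simp [Matrix.det_succ_row_zero, Fin.sum_univ_succ, Fin.succAbove_of_le_castSucc, Fin.succAbove_of_castSucc_lt]
  ring

lemma realkey (u d k : ℝ) (hu : 0 < u) (hk : 0 < k) (hk1 : k < 1) :
    ((0 ≤ d^2 - 4*u → (1-u) + Real.sqrt (d^2-4*u) < k) ∧
     (d^2 - 4*u < 0 → Real.sqrt ((1-u)^2 - (d^2-4*u)) + (1-u) < 2*k)) ↔
    (4*(1-k) < d^2 ∧ 4*(1-k)*(u+k) < d^2 ∧ d^2 + 4*k < (u+1+k)^2) := by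
  rcases le_or_gt 0 (d^2 - 4*u) with ht | ht
  · have hnt : ¬ (d^2 - 4*u < 0) := not_lt.mpr ht
    simp only [hnt, IsEmpty.forall_iff, and_true, forall_const, ht]
    have key : ((1-u) + Real.sqrt (d^2-4*u) < k) ↔ (1 < u + k ∧ d^2-4*u < (k-(1-u))^2) := by
      constructor
      · intro h
        have hs := Real.sqrt_nonneg (d^2-4*u)
        have h1 : 0 < k - (1-u) := by linarith
        exact ⟨by linarith, (Real.sqrt_lt' h1).mp (by linarith)⟩
      · rintro ⟨h1, h2⟩
        have := (Real.sqrt_lt' (by linarith : (0:ℝ) < k - (1-u))).mpr h2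
        linarith
    rw [key]
    constructor
    · rintro ⟨h1, h2⟩
      refine ⟨by nlinarith, by nlinarith, by nlinarith⟩
    · rintro ⟨c1, c2, c3⟩
      have h1 : 1 < u + k := by
        by_contra hc
        push_neg at hc
        nlinarith [mul_nonneg (by linarith : (0:ℝ) ≤ 1-u-k) (by linarith : (0:ℝ) ≤ 3+u+k)]
      exact ⟨h1, by nlinarith⟩
  · have hnt : ¬ (0 ≤ d^2 - 4*u) := not_le.mpr ht
    simp only [hnt, IsEmpty.forall_iff, true_and, forall_const, ht]
    have hpos : 0 < (1-u)^2 - (d^2-4*u) := by nlinarith [sq_nonneg (1-u)]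
    have key : (Real.sqrt ((1-u)^2 - (d^2-4*u)) + (1-u) < 2*k) ↔
        (0 < 2*k - (1-u) ∧ (1-u)^2 - (d^2-4*u) < (2*k-(1-u))^2) := by
      constructor
      · intro h
        have hs := Real.sqrt_pos.mpr hpos
        have h1 : 0 < 2*k - (1-u) := by linarith
        exact ⟨h1, (Real.sqrt_lt' h1).mp (by linarith)⟩
      · rintro ⟨h1, h2⟩
        have := (Real.sqrt_lt' h1).mpr h2
        linarith
    rw [key]
    constructor
    · rintro ⟨h1, h2⟩
      have c2 : 4*(1-k)*(u+k) < d^2 := by nlinarith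
      have hv : 1 < u + k := by nlinarith [c2, ht]
      exact ⟨by nlinarith, c2, by nlinarith [sq_nonneg (u+k-1)]⟩
    · rintro ⟨c1, c2, c3⟩
      have hv : 1 < u + k := by nlinarith
      exact ⟨by linarith, by nlinarith⟩

lemma re_sq_of_sq_eq (μ z : ℂ) (h : μ^2 = z) : 2 * μ.re^2 = ‖z‖ + z.re := by
  have h1 : z.re = μ.re^2 - μ.im^2 := by
    rw [← h, pow_two, Complex.mul_re]; ring
  have h2 : ‖z‖ = μ.re^2 + μ.im^2 := by
    rw [← h, norm_pow, Complex.sq_norm, Complex.normSq_apply]; ring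
  rw [h1, h2]; ring

lemma forall_sqrt_re_lt (z : ℂ) (c : ℝ) (hc : 0 < c) :
    (∀ μ : ℂ, μ^2 = z → μ.re < c) ↔ ‖z‖ + z.re < 2*c^2 := by
  constructor
  · intro H
    obtain ⟨μ, hμ⟩ := IsAlgClosed.exists_pow_nat_eq z (n := 2) (by norm_num)
    have e := re_sq_of_sq_eq μ z hμ
    have h1 := H μ hμ
    have h2 := H (-μ) (by rw [neg_pow]; simpa using hμ)
    simp only [Complex.neg_re] at h2
    nlinarith
  · intro H μ hμ
    have e := re_sq_of_sq_eq μ z hμ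
    nlinarith

lemma stable_iff_sqrt_conds (u d c : ℝ) (hc : 0 < c) :
    (∀ μ : ℂ, (μ^2 - (1-(u:ℂ)))^2 = ((d^2 - 4*u : ℝ):ℂ) → μ.re < c) ↔
    ((0 ≤ d^2 - 4*u → (1-u) + Real.sqrt (d^2-4*u) < c^2) ∧
     (d^2 - 4*u < 0 → Real.sqrt ((1-u)^2 - (d^2-4*u)) + (1-u) < 2*c^2)) := by
  have hiff : (∀ μ : ℂ, (μ^2 - (1-(u:ℂ)))^2 = ((d^2 - 4*u : ℝ):ℂ) → μ.re < c) ↔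
      (∀ z : ℂ, (z - (1-(u:ℂ)))^2 = ((d^2 - 4*u : ℝ):ℂ) →
        ‖z‖ + z.re < 2*c^2) := by
    constructor
    · intro H z hz
      rw [← forall_sqrt_re_lt z c hc]
      intro μ hμ
      exact H μ (by rw [hμ]; exact hz)
    · intro H μ hμ
      exact (forall_sqrt_re_lt (μ^2) c hc).mpr (H _ hμ) μ rfl
  rw [hiff]
  constructor
  · intro H
    constructor
    · intro ht
      have hsq : ((Real.sqrt (d^2-4*u) : ℝ) : ℂ)^2 = ((d^2 - 4*u : ℝ):ℂ) := by
        rw [← Complex.ofReal_pow, Real.sq_sqrt ht]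
      have h1 := H (((1-u) + Real.sqrt (d^2-4*u) : ℝ) : ℂ) (by push_cast at hsq ⊢; linear_combination hsq)
      rw [Complex.norm_real, Real.norm_eq_abs, Complex.ofReal_re] at h1
      rcases le_or_gt ((1-u) + Real.sqrt (d^2-4*u)) 0 with h | h
      · nlinarith
      · rw [abs_of_pos h] at h1; linarith
    · intro ht
      set b := Real.sqrt (-(d^2-4*u)) with hb
      have hbsq : (b:ℝ)^2 = -(d^2-4*u) := Real.sq_sqrt (by linarith)
      have h1 := H ((1-(u:ℂ)) + b * Complex.I) (by
        rw [show ((1:ℂ)-u + b*Complex.I) - (1-u) = (b:ℂ)*Complex.I by ring]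
        rw [mul_pow, Complex.I_sq, ← Complex.ofReal_pow]
        rw [show ((b^2 : ℝ) : ℂ) * (-1) = -((b^2:ℝ):ℂ) by ring]
        rw [hbsq]; push_cast; ring)
      have habs : ‖(1-(u:ℂ)) + b * Complex.I‖ = Real.sqrt ((1-u)^2 - (d^2-4*u)) := by
        rw [show (1-(u:ℂ)) + b*Complex.I = ((1-u : ℝ):ℂ) + (b:ℝ)*Complex.I by push_cast; ring]
        rw [Complex.norm_add_mul_I, hbsq]
        ring_nf
      have hre : ((1-(u:ℂ)) + b * Complex.I).re = 1 - u := by simp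
      rw [habs, hre] at h1
      exact h1
  · rintro ⟨H1, H2⟩ z hz
    rcases le_or_gt 0 (d^2 - 4*u) with ht | ht
    · have hsq : ((Real.sqrt (d^2-4*u) : ℝ) : ℂ)^2 = ((d^2 - 4*u : ℝ):ℂ) := by
        rw [← Complex.ofReal_pow, Real.sq_sqrt ht]
      have hfac : (z - (1-(u:ℂ)) - Real.sqrt (d^2-4*u)) * (z - (1-(u:ℂ)) + Real.sqrt (d^2-4*u)) = 0 := by
        have : (z - (1-(u:ℂ)))^2 - ((Real.sqrt (d^2-4*u) : ℝ) : ℂ)^2 = 0 := by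
          rw [hsq, hz]; ring
        linear_combination this
      rcases mul_eq_zero.mp hfac with h | h
      · have hzeq : z = (((1-u) + Real.sqrt (d^2-4*u) : ℝ) : ℂ) := by
          push_cast; linear_combination h
        rw [hzeq, Complex.norm_real, Real.norm_eq_abs, Complex.ofReal_re]
        have := H1 ht
        rcases le_or_gt ((1-u) + Real.sqrt (d^2-4*u)) 0 with hle | hpos
        · rw [abs_of_nonpos hle]; nlinarith
        · rw [abs_of_pos hpos]; linarith
      · have hzeq : z = (((1-u) - Real.sqrt (d^2-4*u) : ℝ) : ℂ) := by
          push_cast; linear_combination h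
        rw [hzeq, Complex.norm_real, Real.norm_eq_abs, Complex.ofReal_re]
        have h1 := H1 ht
        have hs := Real.sqrt_nonneg (d^2-4*u)
        rcases le_or_gt ((1-u) - Real.sqrt (d^2-4*u)) 0 with hle | hpos
        · rw [abs_of_nonpos hle]; nlinarith
        · rw [abs_of_pos hpos]; linarith
    · set b := Real.sqrt (-(d^2-4*u)) with hb
      have hbsq : (b:ℝ)^2 = -(d^2-4*u) := Real.sq_sqrt (by linarith)
      have hsq : ((b:ℝ):ℂ)^2 * Complex.I^2 = ((d^2 - 4*u : ℝ):ℂ) := by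
        rw [Complex.I_sq, ← Complex.ofReal_pow, hbsq]; push_cast; ring
      have hfac : (z - (1-(u:ℂ)) - b * Complex.I) * (z - (1-(u:ℂ)) + b * Complex.I) = 0 := by
        have : (z - (1-(u:ℂ)))^2 - ((b:ℝ):ℂ)^2 * Complex.I^2 = 0 := by
          rw [hsq, hz]; ring
        linear_combination this
      have h2 := H2 ht
      rcases mul_eq_zero.mp hfac with h | h
      · have hzeq : z = ((1-u : ℝ):ℂ) + (b:ℝ) * Complex.I := by
          push_cast; linear_combination h
        rw [hzeq, Complex.norm_add_mul_I, hbsq]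
        have : ((((1:ℝ)-u :ℝ):ℂ) + (b:ℝ)*Complex.I).re = 1-u := by simp
        rw [this]
        calc Real.sqrt ((1-u)^2 + -(d^2-4*u)) + (1-u)
            = Real.sqrt ((1-u)^2 - (d^2-4*u)) + (1-u) := by ring_nf
          _ < 2*c^2 := h2
      · have hzeq : z = ((1-u : ℝ):ℂ) + (-b:ℝ) * Complex.I := by
          push_cast; linear_combination h
        rw [hzeq, Complex.norm_add_mul_I]
        have : ((((1:ℝ)-u :ℝ):ℂ) + ((-b:ℝ):ℂ)*Complex.I).re = 1-u := by simp
        rw [this, neg_pow, hbsq]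
        calc Real.sqrt ((1-u)^2 + (-1)^2 * -(d^2-4*u)) + (1-u)
            = Real.sqrt ((1-u)^2 - (d^2-4*u)) + (1-u) := by ring_nf
          _ < 2*c^2 := h2

lemma pos_iff_of_eq_mul (P Q p : ℝ) (hp : 0 < p) (h : P = Q * p) : 0 < P ↔ 0 < Q := by
  rw [h]
  constructor
  · intro h0
    by_contra hq
    push_neg at hq
    nlinarith
  · intro h0
    exact mul_pos h0 hp

set_option maxHeartbeats 1000000 in
/-- **Stability criterion in original parameters (iff form).**  With `ε̄ = √(ε² + αc_μ)`,
every complex eigenvalue of the q-dynamics matrix `A` (with `ω̄ = ω/ε̄`, `δ̄ = αc_δ/ε̄²`)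
has real part `< ε/ε̄` iff `c_δ/c_μ > 2√(ε²/(αc_μ) + 1)` and `ω` lies in the stated
frequency window. -/
theorem stmt16 (ε α cμ cδ ω : ℝ) (hε : 0 < ε) (hα : 0 < α) (hcμ : 0 < cμ) (hcδ : 0 < cδ)
    (hω : 0 < ω) (εb : ℝ) (hεb : εb = Real.sqrt (ε ^ 2 + α * cμ)) :
    (∀ μ : ℂ, Module.End.HasEigenvalue
        (Matrix.toLin' ((Amat (ω / εb) (α * cδ / εb ^ 2)).map (algebraMap ℝ ℂ))) μ →
      μ.re < ε / εb) ↔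
    (cδ / cμ > 2 * Real.sqrt (ε ^ 2 / (α * cμ) + 1) ∧
      Real.sqrt (α * cμ) * Real.sqrt (Real.sqrt (cδ ^ 2 / cμ ^ 2
        + 4 * (ε ^ 2 / (α * cμ)) * (ε ^ 2 / (α * cμ) + 1))
        - 2 * (ε ^ 2 / (α * cμ)) - 1) < ω ∧
      ω < Real.sqrt (α * cμ) * Real.sqrt (cδ ^ 2 / (4 * cμ ^ 2) - ε ^ 2 / (α * cμ))) := by
  have ha : 0 < α * cμ := mul_pos hα hcμ
  have hEa : 0 < ε ^ 2 + α * cμ := by positivity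
  have hεbpos : 0 < εb := by rw [hεb]; exact Real.sqrt_pos.mpr hEa
  have hεbsq : εb ^ 2 = ε ^ 2 + α * cμ := by rw [hεb, Real.sq_sqrt hEa.le]
  set w : ℝ := ω / εb with hw
  set u : ℝ := w ^ 2 with hu
  set dd : ℝ := α * cδ / εb ^ 2 with hdd
  set c : ℝ := ε / εb with hcdef
  have hupos : 0 < u := by positivity
  have hdpos : 0 < dd := by positivity
  have hcpos : 0 < c := by positivity
  have hc1 : c < 1 := by
    rw [hcdef, div_lt_one hεbpos, hεb]
    exact (Real.lt_sqrt hε.le).mpr (by nlinarith)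
  have hk : 0 < c ^ 2 := by positivity
  have hk1 : c ^ 2 < 1 := by nlinarith
  -- Step 1: eigenvalue condition ↔ quartic root condition
  have heig : ∀ μ : ℂ, Module.End.HasEigenvalue
      (Matrix.toLin' ((Amat w dd).map (algebraMap ℝ ℂ))) μ ↔
      (μ ^ 2 - (1 - (u:ℂ))) ^ 2 = ((dd ^ 2 - 4 * u : ℝ) : ℂ) := by
    intro μ
    rw [eig_iff_det, det_Amat, sub_eq_zero]
    have h1 : ((dd ^ 2 - 4 * u : ℝ) : ℂ) = (dd:ℂ)^2 - 4*(w:ℂ)^2 := by push_cast [hu]; ring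
    have h2 : (1 - (u:ℂ)) = 1 - (w:ℂ)^2 := by push_cast [hu]; ring
    rw [h1, h2]
  have step1 : (∀ μ : ℂ, Module.End.HasEigenvalue
      (Matrix.toLin' ((Amat w dd).map (algebraMap ℝ ℂ))) μ → μ.re < c) ↔
      (∀ μ : ℂ, (μ ^ 2 - (1 - (u:ℂ))) ^ 2 = ((dd ^ 2 - 4 * u : ℝ) : ℂ) → μ.re < c) :=
    forall_congr' fun μ => imp_congr (heig μ) Iff.rfl
  rw [step1, stable_iff_sqrt_conds u dd c hcpos, realkey u dd (c^2) hupos hk hk1]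
  -- translate the three polynomial conditions
  have hc2 : c^2 = ε^2/(ε^2+α*cμ) := by rw [hcdef, div_pow, hεbsq]
  have hu2 : u = ω^2/(ε^2+α*cμ) := by rw [hu, hw, div_pow, hεbsq]
  have hd2 : dd^2 = (α*cδ)^2/(ε^2+α*cμ)^2 := by rw [hdd, div_pow, hεbsq]
  have hEane : (ε^2+α*cμ) ≠ 0 := hEa.ne'
  have e1 : 4*(1-c^2) < dd^2 ↔ cδ / cμ > 2 * Real.sqrt (ε ^ 2 / (α * cμ) + 1) := by
    have h2s : 2 * Real.sqrt (ε^2/(α*cμ) + 1) = Real.sqrt (4*(ε^2/(α*cμ)+1)) := by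
      rw [show (4:ℝ)*(ε^2/(α*cμ)+1) = 2^2*(ε^2/(α*cμ)+1) by ring,
        Real.sqrt_mul (by positivity : (0:ℝ) ≤ (2:ℝ)^2), Real.sqrt_sq (by norm_num : (0:ℝ) ≤ (2:ℝ))]
    rw [gt_iff_lt, h2s, Real.sqrt_lt' (div_pos hcδ hcμ)]
    rw [← sub_pos (a := dd^2) (b := 4*(1-c^2)),
        ← sub_pos (a := (cδ/cμ)^2) (b := 4*(ε^2/(α*cμ)+1))]
    have hid1 : dd^2 - 4*(1-c^2) = ((cδ/cμ)^2 - 4*(ε^2/(α*cμ)+1)) * ((α*cμ)^2/(ε^2+α*cμ)^2) := by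
      rw [hd2, hc2]; field_simp; ring
    exact pos_iff_of_eq_mul _ _ _ (by positivity) hid1
  have e2 : 4*(1-c^2)*(u+c^2) < dd^2 ↔
      ω < Real.sqrt (α * cμ) * Real.sqrt (cδ ^ 2 / (4 * cμ ^ 2) - ε ^ 2 / (α * cμ)) := by
    rw [← Real.sqrt_mul ha.le, Real.lt_sqrt hω.le]
    rw [← sub_pos (a := dd^2) (b := 4*(1-c^2)*(u+c^2)),
        ← sub_pos (a := α*cμ*(cδ^2/(4*cμ^2) - ε^2/(α*cμ))) (b := ω^2)]
    have hid2 : α*cμ*(cδ^2/(4*cμ^2) - ε^2/(α*cμ)) - ω^2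
        = (dd^2 - 4*(1-c^2)*(u+c^2)) * ((ε^2+α*cμ)^2/(4*(α*cμ))) := by
      rw [hd2, hc2, hu2]; field_simp; ring
    exact (pos_iff_of_eq_mul _ _ _ (by positivity) hid2).symm
  have e3 : dd^2 + 4*c^2 < (u+1+c^2)^2 ↔
      Real.sqrt (α * cμ) * Real.sqrt (Real.sqrt (cδ ^ 2 / cμ ^ 2
        + 4 * (ε ^ 2 / (α * cμ)) * (ε ^ 2 / (α * cμ) + 1))
        - 2 * (ε ^ 2 / (α * cμ)) - 1) < ω := by
    set B : ℝ := cδ ^ 2 / cμ ^ 2 + 4 * (ε ^ 2 / (α * cμ)) * (ε ^ 2 / (α * cμ) + 1) with hB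
    set X : ℝ := Real.sqrt B - 2 * (ε ^ 2 / (α * cμ)) - 1 with hX
    rw [← Real.sqrt_mul ha.le, Real.sqrt_lt' hω]
    have haX : (α*cμ)*X = (α*cμ)*Real.sqrt B - (2*ε^2+α*cμ) := by
      rw [hX]; field_simp; ring
    have hsab : (α*cμ)*Real.sqrt B = Real.sqrt ((α*cμ)^2*B) := by
      rw [Real.sqrt_mul (by positivity : (0:ℝ) ≤ (α*cμ)^2) B, Real.sqrt_sq ha.le]
    have hchain : (α*cμ)*X < ω^2 ↔ (α*cμ)^2*B < (ω^2+2*ε^2+α*cμ)^2 := by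
      rw [← Real.sqrt_lt' (show (0:ℝ) < ω^2+2*ε^2+α*cμ by positivity), ← hsab]
      constructor <;> intro h <;> linarith [haX]
    rw [hchain]
    rw [← sub_pos (a := (u+1+c^2)^2) (b := dd^2+4*c^2),
        ← sub_pos (a := (ω^2+2*ε^2+α*cμ)^2) (b := (α*cμ)^2*B)]
    have hid3 : (ω^2+2*ε^2+α*cμ)^2 - (α*cμ)^2*B
        = ((u+1+c^2)^2 - (dd^2+4*c^2)) * ((ε^2+α*cμ)^2) := by
      rw [hB, hd2, hc2, hu2]; field_simp; ring
    exact (pos_iff_of_eq_mul _ _ _ (by positivity) hid3).symm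
  rw [e1, e2, e3]
  tauto
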